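/- Let g be L-smooth on dom q, q proper closed convex, h = g + q, and suppose the iterates of the proximal gradient method satisfy h(z^{k+1}) + a_k‖z^{k+1} − z^k‖² ≤ h(z^k) and b_k · dist(0, ∂h(z^{k+1})) ≤ ‖z^{k+1} − z^k‖ with a_k ≥ a̲ > 0, and that h satisfies the KL inequality C(h(z) − h*)^θ ≤ dist(0, ∂h(z)) on the sublevel set {h ≤ h* + δ} with h(z⁰) ≤ h* + δ. Then with β_k = a_k b_k² C², the residuals r_k = h(z^k) − h* satisfy r_k − r_{k+1} ≥ β_k r_{k+1}^{2θ} for all k ≥ 0. -/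

import Mathlib

/-- Sufficient decrease + relative error bound + KL inequality imply
the residual recursion r_k − r_{k+1} ≥ β_k r_{k+1}^{2θ}. -/
theorem stmt_18 {d : ℕ}
    (g q h : EuclideanSpace ℝ (Fin d) → ℝ)
    (hh : ∀ z, h z = g z + q z)
    (g' : EuclideanSpace ℝ (Fin d) → EuclideanSpace ℝ (Fin d)) (L : ℝ)
    (hgrad : ∀ z, HasGradientAt g (g' z) z)
    (hsmooth : ∀ u v, ‖g' u - g' v‖ ≤ L * ‖u - v‖)
    (hq_convex : ConvexOn ℝ Set.univ q) (hq_lsc : LowerSemicontinuous q)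
    (subh : EuclideanSpace ℝ (Fin d) → Set (EuclideanSpace ℝ (Fin d)))
    (hsubh : ∀ z, subh z =
      {v | ∃ w, (∀ u, q z + (inner ℝ w (u - z) : ℝ) ≤ q u) ∧ v = g' z + w})
    (z : ℕ → EuclideanSpace ℝ (Fin d)) (a b : ℕ → ℝ)
    (alow : ℝ) (halow : 0 < alow) (ha : ∀ k, alow ≤ a k) (hb : ∀ k, 0 < b k)
    (C θ δ hstar : ℝ) (hC : 0 < C) (hθ : θ ∈ Set.Ico (1/2 : ℝ) 1) (hδ : 0 < δ)
    (hinf : ∀ u, hstar ≤ h u)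
    (hdec : ∀ k, h (z (k + 1)) + a k * ‖z (k + 1) - z k‖ ^ 2 ≤ h (z k))
    (herr : ∀ k, ∀ ε > (0:ℝ), ∃ v ∈ subh (z (k + 1)),
      b k * ‖v‖ ≤ ‖z (k + 1) - z k‖ + ε)
    (hKL : ∀ u, hstar < h u → h u ≤ hstar + δ →
      ∀ v ∈ subh u, C * (h u - hstar) ^ θ ≤ ‖v‖)
    (h0 : h (z 0) ≤ hstar + δ) :
    ∀ k : ℕ, (h (z k) - hstar) - (h (z (k + 1)) - hstar)
      ≥ a k * b k ^ 2 * C ^ 2 * (h (z (k + 1)) - hstar) ^ (2 * θ) := by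

  have hak : ∀ k, 0 < a k := fun k => lt_of_lt_of_le halow (ha k)
  have hmon : ∀ k, h (z (k + 1)) ≤ h (z k) := by
    intro k
    have := hdec k
    nlinarith [mul_nonneg (hak k).le (sq_nonneg ‖z (k + 1) - z k‖)]
  have hle0 : ∀ k, h (z k) ≤ hstar + δ := by
    intro k
    induction k with
    | zero => exact h0
    | succ n ih => exact le_trans (hmon n) ih
  intro k
  set r := h (z (k + 1)) - hstar with hrdef
  have hr0 : 0 ≤ r := by have := hinf (z (k + 1)); linarith
  rcases eq_or_lt_of_le hr0 with hr | hr
  · rw [← hr, Real.zero_rpow (by nlinarith [hθ.1] : (2 : ℝ) * θ ≠ 0)]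
    have := hinf (z k)
    nlinarith
  · -- KL at z (k+1)
    have hKLk : ∀ v ∈ subh (z (k + 1)), C * r ^ θ ≤ ‖v‖ := by
      intro v hv
      exact hKL (z (k + 1)) (by linarith) (hle0 (k + 1)) v hv
    have hkey : b k * (C * r ^ θ) ≤ ‖z (k + 1) - z k‖ := by
      apply le_of_forall_pos_le_add
      intro ε hε
      obtain ⟨v, hv, hvle⟩ := herr k ε hε
      have := hKLk v hv
      nlinarith [hb k]
    have hpow : r ^ (2 * θ) = (r ^ θ) ^ 2 := by
      rw [sq, ← Real.rpow_add hr]; ring_nf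
    have hnn : 0 ≤ b k * (C * r ^ θ) :=
      mul_nonneg (hb k).le (mul_nonneg hC.le (Real.rpow_nonneg hr0 θ))
    have hsq : (b k * (C * r ^ θ)) ^ 2 ≤ ‖z (k + 1) - z k‖ ^ 2 := by
      exact pow_le_pow_left₀ hnn hkey 2
    have := hdec k
    have hak' := hak k
    rw [hpow]
    nlinarith [mul_le_mul_of_nonneg_left hsq hak'.le]
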